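/- Let d ≥ 2, fix 0 < ε < ε_0 (with ε_0 as in the symmetry-breaking theorem for E_ε: ε_0 = (5π/(44√2))² for d = 2 and ε_0 = ((d−1)|S^{d−1}|)/(32d|S^{d−2}|) for d ≥ 3) and d−2 < s < d. Define W(x) = w(r), r = |x|, by w(r) = α r^{−s}(1 − φ(4r−7)) + w₂(r), where w₂(r) = 0 for r ≤ 1−ε; w₂(r) = −φ((r−(1−ε+β/2))/(β/2)) for 1−ε < r < 1−ε+β; w₂(r) = −1 for 1−ε+β ≤ r ≤ 1+ε−β; w₂(r) = −1 + φ(r−(2+ε−β))/φ(−1+β) for 1+ε−β < r < 3+ε−β; and w₂(r) = −1 + 1/φ(−1+β) for r ≥ 3+ε−β. Then for all sufficiently small α, β > 0 (with β < ε), W is smooth on ℝ^d \ {0}, and there exists r₀ > 0 such that w'(r) < 0 for 0 < r < r₀ and w'(r) ≥ 0 for r > r₀ (i.e., W is repulsive at short distance and attractive at long distance). -/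

import Mathlib

open MeasureTheory Metric Filter Set
open scoped ENNReal NNReal Topology

noncomputable section

/-- `|S^k|`: the surface (k-dimensional Hausdorff) measure of the unit sphere
`S^k ⊂ ℝ^(k+1)`. -/
def sphereArea (k : ℕ) : ℝ :=
  (μH[(k : ℝ)] (Metric.sphere (0 : EuclideanSpace ℝ (Fin (k+1))) 1)).toReal

/-- The kernel `K_{r,s}(t)`. -/
def Krs (d : ℕ) (r s t : ℝ) : ℝ :=
  (sphereArea (d-2) / sphereArea (d-1)) *
    ((1 - ((r^2 + s^2 - t^2) / (2*r*s))^2) ^ (((d : ℝ) - 3)/2)) * (t/(r*s)) *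
    Set.indicator (Set.Ioo (r-s) (r+s)) 1 t

/-- The standard smooth bump function supported on `[-1,1]`. -/
def psi (x : ℝ) : ℝ := if |x| < 1 then Real.exp (-(1 - x^2)⁻¹) else 0

/-- The normalized antiderivative of `psi`. -/
def phi (x : ℝ) : ℝ := (∫ y in Set.Iic x, psi y) / ∫ y : ℝ, psi y

/-- The piecewise-defined attractive part `w₂` of the potential in the main construction. -/
def w2 (ε β r : ℝ) : ℝ :=
  if r ≤ 1 - ε then 0
  else if r < 1 - ε + β then -phi ((r - (1 - ε + β/2)) / (β/2))
  else if r ≤ 1 + ε - β then -1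
  else if r < 3 + ε - β then -1 + phi (r - (2 + ε - β)) / phi (-1 + β)
  else -1 + 1 / phi (-1 + β)

/-- The radial profile `w(r) = α r^{-s} (1 - φ(4r - 7)) + w₂(r)` of the constructed potential. -/
def wprof (α β ε s r : ℝ) : ℝ := α * r ^ (-s) * (1 - phi (4*r - 7)) + w2 ε β r

namespace CPaux

def Zc : ℝ := ∫ y : ℝ, psi y

lemma psi_eq_glue : psi = fun x => expNegInvGlue (1 - x ^ 2) := by
  funext x
  simp only [psi, expNegInvGlue]
  rcases lt_or_ge |x| 1 with h | h
  · rw [if_pos h, if_neg (by nlinarith [sq_abs x, abs_nonneg x] : ¬(1 - x ^ 2 ≤ 0))]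
  · rw [if_neg (not_lt.2 h), if_pos (by nlinarith [sq_abs x, abs_nonneg x] : 1 - x ^ 2 ≤ 0)]

lemma psi_contDiff : ContDiff ℝ (((⊤ : ℕ∞)) : WithTop ℕ∞) psi := by
  rw [psi_eq_glue]
  exact expNegInvGlue.contDiff.comp (contDiff_const.sub (contDiff_id.pow 2))

lemma psi_continuous : Continuous psi := psi_contDiff.continuous

lemma psi_nonneg (x : ℝ) : 0 ≤ psi x := by
  unfold psi; split_ifs; exacts [(Real.exp_pos _).le, le_rfl]

lemma psi_pos {x : ℝ} (h : |x| < 1) : 0 < psi x := by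
  unfold psi; rw [if_pos h]; exact Real.exp_pos _

lemma psi_zero {x : ℝ} (h : 1 ≤ |x|) : psi x = 0 := by
  unfold psi; rw [if_neg (not_lt.2 h)]

lemma psi_mono {x y : ℝ} (hx : -1 ≤ x) (hxy : x ≤ y) (hy : y ≤ 0) : psi x ≤ psi y := by
  rcases eq_or_lt_of_le hx with h | h
  · rw [psi_zero (by rw [← h]; norm_num)]; exact psi_nonneg y
  · have hax : |x| < 1 := abs_lt.2 ⟨h, by linarith⟩
    have hay : |y| < 1 := abs_lt.2 ⟨by linarith, by linarith⟩
    unfold psi; rw [if_pos hax, if_pos hay]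
    apply Real.exp_le_exp.2
    have h1 : (0:ℝ) < 1 - x^2 := by nlinarith
    have h2 : (0:ℝ) < 1 - y^2 := by nlinarith
    have h3 : 1 - x^2 ≤ 1 - y^2 := by nlinarith
    have h4 : (1 - y^2)⁻¹ ≤ (1 - x^2)⁻¹ := by gcongr
    linarith

lemma psi_anti {x y : ℝ} (hx : 0 ≤ x) (hxy : x ≤ y) : psi y ≤ psi x := by
  rcases lt_or_ge y 1 with h | h
  · have hax : |x| < 1 := abs_lt.2 ⟨by linarith, by linarith⟩
    have hay : |y| < 1 := abs_lt.2 ⟨by linarith, h⟩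
    unfold psi; rw [if_pos hax, if_pos hay]
    apply Real.exp_le_exp.2
    have h1 : (0:ℝ) < 1 - x^2 := by nlinarith
    have h2 : (0:ℝ) < 1 - y^2 := by nlinarith
    have h3 : 1 - y^2 ≤ 1 - x^2 := by nlinarith
    have h4 : (1 - x^2)⁻¹ ≤ (1 - y^2)⁻¹ := by gcongr
    linarith
  · rw [psi_zero (by rw [abs_of_nonneg (by linarith)]; linarith)]; exact psi_nonneg x

lemma psi_ratio {β x y : ℝ} (hβ0 : 0 < β) (hβ : β ≤ 1/2) (hx : -1 < x) (hxy : x ≤ y)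
    (hy : y ≤ -1 + β) : psi x * Real.exp ((y - x) / (4 * β ^ 2)) ≤ psi y := by
  have hax : |x| < 1 := abs_lt.2 ⟨hx, by linarith⟩
  have hay : |y| < 1 := abs_lt.2 ⟨by linarith, by linarith⟩
  unfold psi
  rw [if_pos hax, if_pos hay, ← Real.exp_add]
  apply Real.exp_le_exp.2
  have hp : (0:ℝ) < 1 - x^2 := by nlinarith [sq_abs x, abs_nonneg x]
  have hq : (0:ℝ) < 1 - y^2 := by nlinarith [sq_abs y, abs_nonneg y]
  have hb2 : (0:ℝ) < 4 * β^2 := by positivity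
  have key : (1 - x^2)⁻¹ - (1 - y^2)⁻¹ = (x^2 - y^2)/((1-x^2)*(1-y^2)) := by
    field_simp
    ring
  have h1 : y - x ≤ x^2 - y^2 := by nlinarith
  have h2 : (1-x^2)*(1-y^2) ≤ 4*β^2 := by
    have e1 : 1 - x^2 ≤ 2*β := by nlinarith
    have e2 : 1 - y^2 ≤ 2*β := by nlinarith
    calc (1-x^2)*(1-y^2) ≤ (2*β)*(2*β) := by
          apply mul_le_mul e1 e2 hq.le (by linarith)
      _ = 4*β^2 := by ring
  have h3 : (y - x)/(4*β^2) ≤ (x^2-y^2)/((1-x^2)*(1-y^2)) :=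
    div_le_div₀ (by nlinarith) h1 (by positivity) h2
  linarith

lemma psi_hasCompactSupport : HasCompactSupport psi := by
  apply HasCompactSupport.intro (isCompact_Icc (a := (-1:ℝ)) (b := 1))
  intro x hx
  rw [mem_Icc] at hx
  push_neg at hx
  apply psi_zero
  rcases lt_or_ge x (-1) with h | h
  · rw [abs_of_neg (by linarith)]; linarith
  · have h2 := hx h
    rw [abs_of_nonneg (by linarith)]; linarith

lemma psi_integrable : Integrable psi :=
  psi_continuous.integrable_of_hasCompactSupport psi_hasCompactSupport

lemma psi_integrableOn (s : Set ℝ) : IntegrableOn psi s := psi_integrable.integrableOn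

lemma Zc_pos : 0 < Zc := by
  rw [Zc, integral_pos_iff_support_of_nonneg psi_nonneg psi_integrable]
  have h : Ioo (-1:ℝ) 1 ⊆ Function.support psi :=
    fun x hx => (psi_pos (abs_lt.2 ⟨hx.1, hx.2⟩)).ne'
  calc (0:ℝ≥0∞) < volume (Ioo (-1:ℝ) 1) := by rw [Real.volume_Ioo]; norm_num
    _ ≤ _ := measure_mono h

lemma Nf_sub (a x : ℝ) :
    (∫ y in Iic x, psi y) - (∫ y in Iic a, psi y) = ∫ y in a..x, psi y :=
  intervalIntegral.integral_Iic_sub_Iic (psi_integrableOn _) (psi_integrableOn _)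

lemma hasDerivAt_phi (x : ℝ) : HasDerivAt phi (psi x / Zc) x := by
  have h1 : HasDerivAt (fun t => ∫ y in (x-1)..t, psi y) (psi x) x :=
    intervalIntegral.integral_hasDerivAt_right (psi_continuous.intervalIntegrable _ _)
      (psi_continuous.stronglyMeasurableAtFilter _ _) psi_continuous.continuousAt
  have h2 : HasDerivAt (fun t => ∫ y in Iic t, psi y) (psi x) x := by
    have he : (fun t => ∫ y in Iic t, psi y)
        = fun t => (∫ y in Iic (x-1), psi y) + ∫ y in (x-1)..t, psi y := by
      funext t
      have := Nf_sub (x-1) t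
      linarith
    rw [he]; exact h1.const_add _
  exact h2.div_const Zc

lemma phi_contDiff : ContDiff ℝ (((⊤ : ℕ∞)) : WithTop ℕ∞) phi := by
  rw [contDiff_infty_iff_deriv]
  refine ⟨fun x => (hasDerivAt_phi x).differentiableAt, ?_⟩
  have : deriv phi = fun x => psi x / Zc := funext fun x => (hasDerivAt_phi x).deriv
  rw [this]
  exact psi_contDiff.div_const _

lemma integral_Iic_psi_zero {x : ℝ} (hx : x ≤ -1) : ∫ y in Iic x, psi y = 0 := by
  rw [setIntegral_congr_fun measurableSet_Iic
    (g := fun _ => (0:ℝ)) (fun y hy => psi_zero (by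
      rw [mem_Iic] at hy
      rw [abs_of_neg (by linarith)]; linarith))]
  simp

lemma phi_of_le {x : ℝ} (hx : x ≤ -1) : phi x = 0 := by
  unfold phi; rw [integral_Iic_psi_zero hx, zero_div]

lemma phi_of_ge {x : ℝ} (hx : 1 ≤ x) : phi x = 1 := by
  have h0 : ∫ y in Ioi x, psi y = 0 := by
    rw [setIntegral_congr_fun measurableSet_Ioi
      (g := fun _ => (0:ℝ)) (fun y hy => psi_zero (by
        rw [mem_Ioi] at hy
        rw [abs_of_nonneg (by linarith)]; linarith))]
    simp
  have hsum := intervalIntegral.integral_Iic_add_Ioi (μ := volume)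
    (psi_integrableOn (Iic x)) (psi_integrableOn (Ioi x))
  unfold phi
  rw [show (∫ y : ℝ, psi y) = Zc from rfl]
  rw [show (∫ y in Iic x, psi y) = Zc by
    rw [show Zc = ∫ y : ℝ, psi y from rfl, ← hsum, h0, add_zero]]
  exact div_self Zc_pos.ne'

lemma phi_mono : Monotone phi := by
  intro x y hxy
  unfold phi
  rw [show (∫ y : ℝ, psi y) = Zc from rfl]
  have hnum : (∫ t in Iic x, psi t) ≤ ∫ t in Iic y, psi t := by
    apply setIntegral_mono_set (psi_integrableOn _)
      (Eventually.of_forall psi_nonneg)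
    exact HasSubset.Subset.eventuallyLE (Iic_subset_Iic.2 hxy)
  exact (div_le_div_iff_of_pos_right Zc_pos).2 hnum

lemma phi_pos {x : ℝ} (hx : -1 < x) : 0 < phi x := by
  apply div_pos ?_ Zc_pos
  rw [setIntegral_pos_iff_support_of_nonneg_ae (Eventually.of_forall psi_nonneg)
    (psi_integrableOn _)]
  have hsub : Ioo (-1) (min x 1) ⊆ Function.support psi ∩ Iic x := by
    intro y hy
    rcases hy with ⟨hy1, hy2⟩
    rw [lt_min_iff] at hy2
    exact ⟨(psi_pos (abs_lt.2 ⟨hy1, hy2.2⟩)).ne', le_of_lt hy2.1⟩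
  calc (0:ℝ≥0∞) < volume (Ioo (-1:ℝ) (min x 1)) := by
        rw [Real.volume_Ioo]
        rw [ENNReal.ofReal_pos]
        have h1 : -1 < min x 1 := lt_min hx (by norm_num)
        linarith
    _ ≤ _ := measure_mono hsub

lemma phi_lt_one {x : ℝ} (hx : x < 1) : phi x < 1 := by
  have key : 0 < ∫ y in Ioi x, psi y := by
    rw [setIntegral_pos_iff_support_of_nonneg_ae (Eventually.of_forall psi_nonneg)
      (psi_integrableOn _)]
    have hsub : Ioo (max x (-1)) 1 ⊆ Function.support psi ∩ Ioi x := by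
      intro y hy
      rcases hy with ⟨hy1, hy2⟩
      rw [max_lt_iff] at hy1
      exact ⟨(psi_pos (abs_lt.2 ⟨hy1.2, hy2⟩)).ne', hy1.1⟩
    calc (0:ℝ≥0∞) < volume (Ioo (max x (-1)) 1) := by
          rw [Real.volume_Ioo, ENNReal.ofReal_pos, sub_pos]
          exact max_lt hx (by norm_num)
      _ ≤ _ := measure_mono hsub
  have hsum := intervalIntegral.integral_Iic_add_Ioi (μ := volume)
    (psi_integrableOn (Iic x)) (psi_integrableOn (Ioi x))
  unfold phi
  rw [show (∫ y : ℝ, psi y) = Zc from rfl, div_lt_one Zc_pos]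
  have : (∫ y : ℝ, psi y) = Zc := rfl
  rw [this] at hsum
  linarith

lemma phi_nonneg (x : ℝ) : 0 ≤ phi x := by
  have h := phi_mono (min_le_right (-1) x)
  rwa [phi_of_le (min_le_left (-1) x)] at h

lemma phi_le_one (x : ℝ) : phi x ≤ 1 := by
  have := phi_mono (le_max_left x 1)
  rwa [phi_of_ge (le_max_right x 1)] at this

lemma phi_small {β : ℝ} (h0 : 0 < β) (h1 : β ≤ 1) : phi (-1+β) ≤ β * psi (-1+β) / Zc := by
  unfold phi
  rw [show (∫ y : ℝ, psi y) = Zc from rfl]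
  rw [div_le_div_iff_of_pos_right Zc_pos]
  have hsplit : (∫ y in Iic (-1+β), psi y) = ∫ y in Ioc (-1:ℝ) (-1+β), psi y := by
    have h2 := Nf_sub (-1) (-1+β)
    rw [integral_Iic_psi_zero le_rfl, sub_zero] at h2
    rw [h2, intervalIntegral.integral_of_le (by linarith)]
  rw [hsplit]
  have hle : (∫ y in Ioc (-1:ℝ) (-1+β), psi y) ≤ ∫ _ in Ioc (-1:ℝ) (-1+β), psi (-1+β) := by
    apply setIntegral_mono_on (psi_integrableOn _) ?_ measurableSet_Ioc
    · intro y hy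
      exact psi_mono (le_of_lt hy.1) hy.2 (by linarith)
    · exact integrableOn_const (by rw [Real.volume_Ioc]; exact ENNReal.ofReal_ne_top)
  have heq : (∫ _ in Ioc (-1:ℝ) (-1+β), psi (-1+β)) = β * psi (-1+β) := by
    rw [setIntegral_const, Real.volume_real_Ioc_of_le (by linarith), smul_eq_mul]
    ring_nf
  linarith

end CPaux

namespace CPaux

def Af (ε β r : ℝ) : ℝ := -phi ((r - (1 - ε + β/2)) / (β/2))
def Bf (ε β r : ℝ) : ℝ := -1 + phi (r - (2 + ε - β)) / phi (-1 + β)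
def Apr (ε β r : ℝ) : ℝ := -(psi ((r - (1 - ε + β/2)) / (β/2)) / Zc * (β/2)⁻¹)
def vfun (ε β r : ℝ) : ℝ := psi (r - (2 + ε - β)) / Zc / phi (-1 + β)
def gfun (s r : ℝ) : ℝ :=
  s * (r ^ (-s - 1) * (1 - phi (4 * r - 7))) + 4 * (r ^ (-s) * (psi (4 * r - 7) / Zc))

lemma w2_eq_Af {ε β : ℝ} (hβ : 0 < β) {r : ℝ} (hr : r < 1 + ε - β) :
    w2 ε β r = Af ε β r := by
  have hβ2 : (0:ℝ) < β/2 := by linarith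
  unfold w2 Af
  split_ifs with h1 h2 h3 h4
  · rw [phi_of_le (by rw [div_le_iff₀ hβ2]; linarith), neg_zero]
  · rfl
  · rw [phi_of_ge (by rw [le_div_iff₀ hβ2]; linarith)]
  · linarith
  · linarith

lemma w2_eq_Bf {ε β : ℝ} (hβ : 0 < β) {r : ℝ} (hr : 1 - ε + β < r) :
    w2 ε β r = Bf ε β r := by
  unfold w2 Bf
  split_ifs with h1 h2 h3 h4
  · linarith
  · linarith
  · rw [phi_of_le (by linarith), zero_div, add_zero]
  · rfl
  · rw [phi_of_ge (show (1:ℝ) ≤ r - (2 + ε - β) by push_neg at h4; linarith)]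

lemma hasDerivAt_Af {ε β : ℝ} (hβ : 0 < β) (r : ℝ) :
    HasDerivAt (Af ε β) (Apr ε β r) r := by
  have h1 : HasDerivAt (fun t : ℝ => (t - (1 - ε + β/2)) / (β/2)) ((β/2)⁻¹) r := by
    simpa [one_div] using ((hasDerivAt_id r).sub_const (1 - ε + β/2)).div_const (β/2)
  exact ((hasDerivAt_phi _).comp r h1).neg

lemma hasDerivAt_Bf (ε β : ℝ) (r : ℝ) :
    HasDerivAt (Bf ε β) (vfun ε β r) r := by
  have h1 : HasDerivAt (fun t : ℝ => t - (2 + ε - β)) 1 r := (hasDerivAt_id r).sub_const _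
  have h2 := ((hasDerivAt_phi (r - (2 + ε - β))).comp r h1).div_const (phi (-1 + β))
  have h3 := h2.const_add (-1 : ℝ)
  rw [show Bf ε β = fun x => -1 + phi (x - (2 + ε - β)) / phi (-1 + β) from rfl]
  simpa [vfun] using h3

lemma hasDerivAt_repulse {s α r : ℝ} (hr : 0 < r) :
    HasDerivAt (fun t : ℝ => α * t ^ (-s) * (1 - phi (4*t - 7))) (-(α * gfun s r)) r := by
  have h1 : HasDerivAt (fun t : ℝ => t ^ (-s)) (-s * r ^ (-s - 1)) r :=
    Real.hasDerivAt_rpow_const (Or.inl hr.ne')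
  have hin : HasDerivAt (fun t : ℝ => 4 * t - 7) 4 r := by
    simpa using ((hasDerivAt_id r).const_mul 4).sub_const 7
  have h2 : HasDerivAt (fun t : ℝ => 1 - phi (4*t - 7)) (-(psi (4*r - 7) / Zc * 4)) r :=
    (((hasDerivAt_phi _).comp r hin)).const_sub 1
  have h3 := (h1.const_mul α).mul h2
  refine h3.congr_deriv ?_
  unfold gfun
  ring

lemma hasDerivAt_wprof_A {α β ε s r : ℝ} (hβ : 0 < β) (hr0 : 0 < r) (hra : r < 1 + ε - β) :
    HasDerivAt (wprof α β ε s) (-(α * gfun s r) + Apr ε β r) r := by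
  have h := (hasDerivAt_repulse (α := α) (s := s) hr0).add (hasDerivAt_Af hβ (ε := ε) r)
  apply h.congr_of_eventuallyEq
  filter_upwards [Iio_mem_nhds hra] with t ht
  simp only [wprof]
  rw [w2_eq_Af hβ ht]
  rfl

lemma hasDerivAt_wprof_B {α β ε s r : ℝ} (hβ : 0 < β) (hr0 : 0 < r) (hra : 1 - ε + β < r) :
    HasDerivAt (wprof α β ε s) (-(α * gfun s r) + vfun ε β r) r := by
  have h := (hasDerivAt_repulse (α := α) (s := s) hr0).add (hasDerivAt_Bf ε β r)
  apply h.congr_of_eventuallyEq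
  filter_upwards [Ioi_mem_nhds hra] with t ht
  simp only [wprof]
  rw [w2_eq_Bf hβ ht]
  rfl


lemma Apr_nonpos {ε β : ℝ} (hβ : 0 < β) (r : ℝ) : Apr ε β r ≤ 0 := by
  unfold Apr
  apply neg_nonpos.2
  exact mul_nonneg (div_nonneg (psi_nonneg _) Zc_pos.le) (inv_nonneg.2 (by linarith))

lemma vfun_nonneg (ε β r : ℝ) : 0 ≤ vfun ε β r :=
  div_nonneg (div_nonneg (psi_nonneg _) Zc_pos.le) (phi_nonneg _)

lemma vfun_at_a {ε β : ℝ} : vfun ε β (1 + ε - β) = 0 := by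
  unfold vfun
  rw [psi_zero (by rw [show (1 + ε - β - (2 + ε - β)) = -1 by ring]; norm_num)]
  simp

lemma gfun_nonneg {s r : ℝ} (hs : 0 < s) (hr : 0 < r) : 0 ≤ gfun s r := by
  unfold gfun
  apply add_nonneg
  · exact mul_nonneg hs.le (mul_nonneg (Real.rpow_pos_of_pos hr _).le
      (by linarith [phi_le_one (4*r - 7)]))
  · exact mul_nonneg (by norm_num) (mul_nonneg (Real.rpow_pos_of_pos hr _).le
      (div_nonneg (psi_nonneg _) Zc_pos.le))

lemma gfun_pos {s r : ℝ} (hs : 0 < s) (h0 : 0 < r) (h2 : r < 2) : 0 < gfun s r := by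
  unfold gfun
  have hφ : phi (4*r - 7) < 1 := phi_lt_one (by linarith)
  apply add_pos_of_pos_of_nonneg
  · exact mul_pos hs (mul_pos (Real.rpow_pos_of_pos h0 _) (by linarith))
  · exact mul_nonneg (by norm_num) (mul_nonneg (Real.rpow_pos_of_pos h0 _).le
      (div_nonneg (psi_nonneg _) Zc_pos.le))

lemma gfun_zero {s r : ℝ} (hr : 2 ≤ r) : gfun s r = 0 := by
  unfold gfun
  rw [phi_of_ge (by linarith), psi_zero (by
    rw [abs_of_nonneg (by linarith : (0:ℝ) ≤ 4*r - 7)]; linarith)]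
  simp

lemma gfun_anti {s : ℝ} (hs : 0 < s) {r r' : ℝ} (h1 : 7/4 ≤ r) (h2 : r ≤ r') (h3 : r' ≤ 2) :
    gfun s r' ≤ gfun s r := by
  have hr0 : (0:ℝ) < r := by linarith
  have hr0' : (0:ℝ) < r' := by linarith
  unfold gfun
  have hx : r' ^ (-s - 1) ≤ r ^ (-s - 1) :=
    Real.rpow_le_rpow_of_nonpos hr0 h2 (by linarith)
  have hx2 : r' ^ (-s) ≤ r ^ (-s) :=
    Real.rpow_le_rpow_of_nonpos hr0 h2 (by linarith)
  have hφ : phi (4*r - 7) ≤ phi (4*r' - 7) := phi_mono (by linarith)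
  have hψ : psi (4*r' - 7) ≤ psi (4*r - 7) := psi_anti (by linarith) (by linarith)
  have t1 : r' ^ (-s - 1) * (1 - phi (4*r' - 7)) ≤ r ^ (-s - 1) * (1 - phi (4*r - 7)) :=
    mul_le_mul hx (by linarith) (by linarith [phi_le_one (4*r' - 7)])
      (Real.rpow_pos_of_pos hr0 _).le
  have t2 : r' ^ (-s) * (psi (4*r' - 7) / Zc) ≤ r ^ (-s) * (psi (4*r - 7) / Zc) :=
    mul_le_mul hx2 ((div_le_div_iff_of_pos_right Zc_pos).2 hψ)
      (div_nonneg (psi_nonneg _) Zc_pos.le) (Real.rpow_pos_of_pos hr0 _).le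
  exact add_le_add (mul_le_mul_of_nonneg_left t1 hs.le)
    (mul_le_mul_of_nonneg_left t2 (by norm_num))

lemma gfun_lower {s : ℝ} (hs : 0 < s) {r : ℝ} (h1 : 1 ≤ r) (h2 : r ≤ 7/4) :
    s * ((7/4:ℝ) ^ (-s - 1) * (1 - phi 0)) ≤ gfun s r := by
  have hφ : phi (4*r - 7) ≤ phi 0 := phi_mono (by linarith)
  have hx : (7/4:ℝ) ^ (-s - 1) ≤ r ^ (-s - 1) :=
    Real.rpow_le_rpow_of_nonpos (by linarith) h2 (by linarith)
  have h0 : phi 0 < 1 := phi_lt_one (by norm_num)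
  have t1 : (7/4:ℝ) ^ (-s - 1) * (1 - phi 0) ≤ r ^ (-s - 1) * (1 - phi (4*r - 7)) :=
    mul_le_mul hx (by linarith) (by linarith) (Real.rpow_pos_of_pos (by linarith) _).le
  have t2 : 0 ≤ 4 * (r ^ (-s) * (psi (4*r - 7) / Zc)) :=
    mul_nonneg (by norm_num) (mul_nonneg (Real.rpow_pos_of_pos (by linarith) _).le
      (div_nonneg (psi_nonneg _) Zc_pos.le))
  unfold gfun
  nlinarith [mul_le_mul_of_nonneg_left t1 hs.le]

lemma gfun_contDiffAt {s r : ℝ} (hr : 0 < r) :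
    ContDiffAt ℝ (((⊤ : ℕ∞)) : WithTop ℕ∞) (gfun s) r := by
  have hin : ContDiffAt ℝ (((⊤ : ℕ∞)) : WithTop ℕ∞) (fun t : ℝ => 4 * t - 7) r :=
    ((contDiffAt_const.mul contDiffAt_id).sub contDiffAt_const)
  apply ContDiffAt.add
  · exact contDiffAt_const.mul ((Real.contDiffAt_rpow_const_of_ne hr.ne').mul
      (contDiffAt_const.sub (phi_contDiff.contDiffAt.comp r hin)))
  · exact contDiffAt_const.mul ((Real.contDiffAt_rpow_const_of_ne hr.ne').mul
      ((psi_contDiff.contDiffAt.comp r hin).div_const _))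

lemma vfun_continuous (ε β : ℝ) : Continuous (vfun ε β) := by
  unfold vfun
  exact ((psi_continuous.comp (continuous_id.sub continuous_const)).div_const _).div_const _

lemma wprof_contDiffAt {α β ε s : ℝ} (hβ0 : 0 < β) (hβε : β < ε) {r : ℝ} (hr : 0 < r) :
    ContDiffAt ℝ (((⊤ : ℕ∞)) : WithTop ℕ∞) (wprof α β ε s) r := by
  have hin : ContDiffAt ℝ (((⊤ : ℕ∞)) : WithTop ℕ∞) (fun t : ℝ => 4 * t - 7) r :=
    ((contDiffAt_const.mul contDiffAt_id).sub contDiffAt_const)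
  have h1 : ContDiffAt ℝ (((⊤ : ℕ∞)) : WithTop ℕ∞)
      (fun t : ℝ => α * t ^ (-s) * (1 - phi (4*t - 7))) r :=
    (contDiffAt_const.mul (Real.contDiffAt_rpow_const_of_ne hr.ne')).mul
      (contDiffAt_const.sub (phi_contDiff.contDiffAt.comp r hin))
  have h2 : ContDiffAt ℝ (((⊤ : ℕ∞)) : WithTop ℕ∞) (w2 ε β) r := by
    rcases lt_or_ge r (1 + ε - β) with h | h
    · have hAf : ContDiffAt ℝ (((⊤ : ℕ∞)) : WithTop ℕ∞) (Af ε β) r :=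
        (phi_contDiff.contDiffAt.comp r
          ((contDiffAt_id.sub contDiffAt_const).div_const _)).neg
      apply hAf.congr_of_eventuallyEq
      exact Filter.eventuallyEq_of_mem (Iio_mem_nhds h) (fun t ht => w2_eq_Af hβ0 ht)
    · have hBf : ContDiffAt ℝ (((⊤ : ℕ∞)) : WithTop ℕ∞) (Bf ε β) r :=
        contDiffAt_const.add ((phi_contDiff.contDiffAt.comp r
          (contDiffAt_id.sub contDiffAt_const)).div_const _)
      apply hBf.congr_of_eventuallyEq
      apply Filter.eventuallyEq_of_mem (Ioi_mem_nhds (show 1 - ε + β < r by linarith))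
      exact fun t ht => w2_eq_Bf hβ0 ht
  exact h1.add h2

end CPaux


open CPaux in
set_option maxHeartbeats 1000000 in
/-- For sufficiently small `α, β > 0` (with `β < ε`), the constructed potential
`W(x) = w(|x|)` with `w(r) = α r^{-s}(1 - φ(4r-7)) + w₂(r)` is smooth away from the origin,
repulsive at short distance and attractive at long distance. -/
theorem constructed_potential_properties (d : ℕ) (hd : 2 ≤ d) (ε₀ : ℝ)
    (hε₀ : ε₀ = if d = 2 then (5 * Real.pi / (44 * Real.sqrt 2))^2
      else ((d : ℝ) - 1) * sphereArea (d-1) / (32 * d * sphereArea (d-2)))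
    (ε : ℝ) (hε0 : 0 < ε) (hε : ε < ε₀)
    (s : ℝ) (hs1 : (d : ℝ) - 2 < s) (hs2 : s < d) :
    ∃ α₀ > (0 : ℝ), ∃ β₀ > (0 : ℝ), ∀ α β : ℝ,
      0 < α → α < α₀ → 0 < β → β < β₀ → β < ε →
      (∀ n : ℕ, ContDiffOn ℝ n
        (fun x : EuclideanSpace ℝ (Fin d) => wprof α β ε s ‖x‖)
        {(0 : EuclideanSpace ℝ (Fin d))}ᶜ) ∧
      ∃ r₀ > (0 : ℝ),
        (∀ r : ℝ, 0 < r → r < r₀ → deriv (wprof α β ε s) r < 0) ∧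
        (∀ r : ℝ, r₀ < r → 0 ≤ deriv (wprof α β ε s) r) := by
  have hs0 : 0 < s := by
    have h2d : (2:ℝ) ≤ (d:ℝ) := by exact_mod_cast hd
    linarith
  -- bound for gfun on [1,2]
  obtain ⟨Cb, hCb⟩ : ∃ C, ∀ r ∈ Icc (1:ℝ) 2, ‖gfun s r‖ ≤ C := by
    apply isCompact_Icc.exists_bound_of_continuousOn
    intro r hr
    exact (gfun_contDiffAt (show (0:ℝ) < r by linarith [hr.1])).continuousAt.continuousWithinAt
  have hCb0 : 0 ≤ Cb := le_trans (norm_nonneg _) (hCb 1 (by norm_num))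
  -- Lipschitz-type bound for gfun on [1,7/4]
  obtain ⟨Kb, hKb0, hKb⟩ : ∃ K, 0 ≤ K ∧ ∀ x ∈ Icc (1:ℝ) (7/4), ∀ y ∈ Icc (1:ℝ) (7/4),
      x ≤ y → gfun s y - gfun s x ≤ K * (y - x) := by
    obtain ⟨K, hK⟩ : ∃ K, ∀ r ∈ Icc (1:ℝ) (7/4), ‖deriv (gfun s) r‖ ≤ K := by
      apply isCompact_Icc.exists_bound_of_continuousOn
      have hg : ContDiffOn ℝ (((⊤ : ℕ∞)) : WithTop ℕ∞) (gfun s) (Ioi 0) :=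
        fun r hr => (gfun_contDiffAt hr).contDiffWithinAt
      have hcont := hg.continuousOn_deriv_of_isOpen isOpen_Ioi (by norm_num)
      exact hcont.mono (fun x hx => show (0:ℝ) < x by have := hx.1; linarith)
    refine ⟨max K 0, le_max_right _ _, ?_⟩
    intro x hx y hy hxy
    rcases eq_or_lt_of_le hxy with rfl | hlt
    · simp
    have hdiff : DifferentiableOn ℝ (gfun s) (Icc x y) := by
      intro t ht
      exact ((gfun_contDiffAt (show (0:ℝ) < t by
        have := ht.1; have := hx.1; linarith)).differentiableAt (by norm_num)).differentiableWithinAt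
    have hbound : ∀ t ∈ Ico x y, ‖derivWithin (gfun s) (Icc x y) t‖ ≤ max K 0 := by
      intro t ht
      have htm : t ∈ Icc (1:ℝ) (7/4) := ⟨le_trans hx.1 ht.1, le_trans ht.2.le hy.2⟩
      have hda : DifferentiableAt ℝ (gfun s) t :=
        (gfun_contDiffAt (show (0:ℝ) < t by linarith [htm.1])).differentiableAt (by norm_num)
      rw [hda.derivWithin ((uniqueDiffOn_Icc hlt).uniqueDiffWithinAt (Ico_subset_Icc_self ht))]
      exact le_trans (hK t htm) (le_max_left _ _)
    have hmv := norm_image_sub_le_of_norm_deriv_le_segment hdiff hbound y (right_mem_Icc.2 hxy)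
    rw [Real.norm_eq_abs] at hmv
    exact le_trans (le_abs_self _) hmv
  set g7 : ℝ := s * ((7/4:ℝ) ^ (-s - 1) * (1 - phi 0)) with hg7def
  have hg70 : 0 < g7 := mul_pos hs0 (mul_pos (Real.rpow_pos_of_pos (by norm_num) _)
    (by linarith [phi_lt_one (show (0:ℝ) < 1 by norm_num)]))
  set L : ℝ := Kb / g7 with hLdef
  have hL0 : 0 ≤ L := div_nonneg hKb0 hg70.le
  -- growth bound for gfun
  have hggrow : ∀ r r' : ℝ, 1 ≤ r → r ≤ r' → r' ≤ 2 →
      gfun s r' ≤ gfun s r * Real.exp (L * (r' - r)) := by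
    have base : ∀ r r' : ℝ, 1 ≤ r → r ≤ r' → r' ≤ 7/4 →
        gfun s r' ≤ gfun s r * Real.exp (L * (r' - r)) := by
      intro r r' h1 h2 h3
      have hK := hKb r ⟨h1, by linarith⟩ r' ⟨by linarith, h3⟩ h2
      have hgr : g7 ≤ gfun s r := gfun_lower hs0 h1 (by linarith)
      have hKL : Kb ≤ gfun s r * L := by
        rw [hLdef, mul_div_assoc']
        rw [le_div_iff₀ hg70]
        nlinarith
      have hlin : gfun s r' ≤ gfun s r * (1 + L * (r' - r)) := by
        have h5 : Kb * (r' - r) ≤ (gfun s r * L) * (r' - r) :=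
          mul_le_mul_of_nonneg_right hKL (by linarith)
        nlinarith
      have hexp1 : 1 + L * (r' - r) ≤ Real.exp (L * (r' - r)) := by
        have := Real.add_one_le_exp (L * (r' - r))
        linarith
      have hg0 : 0 ≤ gfun s r := by linarith
      nlinarith
    intro r r' h1 h2 h3
    rcases le_or_gt r' (7/4) with h4 | h4
    · exact base r r' h1 h2 h4
    rcases le_or_gt r (7/4) with h5 | h5
    · have hb := base r (7/4) h1 h5 le_rfl
      have ha := gfun_anti hs0 le_rfl h4.le h3
      have hexp : Real.exp (L * (7/4 - r)) ≤ Real.exp (L * (r' - r)) :=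
        Real.exp_le_exp.2 (by nlinarith)
      have hg0 : 0 ≤ gfun s r := gfun_nonneg hs0 (by linarith)
      calc gfun s r' ≤ gfun s (7/4) := ha
        _ ≤ gfun s r * Real.exp (L * (7/4 - r)) := hb
        _ ≤ gfun s r * Real.exp (L * (r' - r)) := mul_le_mul_of_nonneg_left hexp hg0
    · have ha := gfun_anti hs0 h5.le h2 h3
      have hone : (1:ℝ) ≤ Real.exp (L * (r' - r)) :=
        Real.one_le_exp (by nlinarith)
      nlinarith [gfun_nonneg hs0 (show (0:ℝ) < r' by linarith)]
  refine ⟨1, one_pos,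
    min (min (1/2) (1/(Cb+1))) (min (Real.sqrt (1/(4*(L+1)))) (if 1 < ε then ε - 1 else 1)),
    ?_, ?_⟩
  · apply lt_min (lt_min (by norm_num) (by positivity))
    apply lt_min (Real.sqrt_pos.2 (by positivity))
    split_ifs with h
    · linarith
    · norm_num
  intro α β hα0 hα1 hβ0 hββ0 hβε
  have hβhalf : β ≤ 1/2 :=
    le_of_lt (lt_of_lt_of_le hββ0 (le_trans (min_le_left _ _) (min_le_left _ _)))
  have hβC : β * (Cb + 1) < 1 := by
    have h := lt_of_lt_of_le hββ0 (le_trans (min_le_left _ _) (min_le_right _ _))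
    rw [lt_div_iff₀ (by linarith : (0:ℝ) < Cb + 1)] at h
    linarith
  have hβL : 4 * β^2 * L < 1 := by
    have h1 : β < Real.sqrt (1/(4*(L+1))) :=
      lt_of_lt_of_le hββ0 (le_trans (min_le_right _ _) (min_le_left _ _))
    have h2 : β^2 < 1/(4*(L+1)) := by
      have hsq := Real.sq_sqrt (le_of_lt (show (0:ℝ) < 1/(4*(L+1)) by positivity))
      nlinarith [Real.sqrt_nonneg (1/(4*(L+1)))]
    have h3 : (0:ℝ) < 4*(L+1) := by positivity
    rw [lt_div_iff₀ h3] at h2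
    nlinarith
  have hβε1 : 1 < ε → β < ε - 1 := by
    intro h
    have h4 := lt_of_lt_of_le hββ0 (le_trans (min_le_right _ _) (min_le_right _ _))
    rwa [if_pos h] at h4
  constructor
  · -- smoothness
    intro n x hx
    have hx0 : x ≠ 0 := hx
    have hnorm : (0:ℝ) < ‖x‖ := norm_pos_iff.2 hx0
    have h1 : ContDiffAt ℝ n (wprof α β ε s) ‖x‖ :=
      (wprof_contDiffAt hβ0 hβε hnorm).of_le (by exact_mod_cast le_top)
    have h2 : ContDiffAt ℝ n (fun y : EuclideanSpace ℝ (Fin d) => ‖y‖) x :=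
      contDiffAt_norm ℝ hx0
    exact (h1.comp x h2).contDiffWithinAt
  · -- sign of the derivative
    set a : ℝ := 1 + ε - β with hadef
    have ha1 : 1 < a := by rw [hadef]; linarith
    by_cases hcase : 2 ≤ a
    · -- large ε case
      refine ⟨2, by norm_num, ?_, ?_⟩
      · intro r hr0 hr2
        have hda := hasDerivAt_wprof_A (α := α) (β := β) (ε := ε) (s := s) hβ0 hr0 (by rw [← hadef]; linarith)
        rw [hda.deriv]
        have h1 : 0 < gfun s r := gfun_pos hs0 hr0 hr2
        have h2 : Apr ε β r ≤ 0 := Apr_nonpos hβ0 r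
        nlinarith [mul_pos hα0 h1]
      · intro r hr2
        have hb : 1 - ε + β < r := by
          have : 2 ≤ 1 + ε - β := hcase
          linarith
        have hdb := hasDerivAt_wprof_B (α := α) (β := β) (ε := ε) (s := s) hβ0 (by linarith) hb
        rw [hdb.deriv, gfun_zero (by linarith : (2:ℝ) ≤ r)]
        have := vfun_nonneg ε β r
        simp only [mul_zero, neg_zero, zero_add]
        exact this
    · push_neg at hcase
      have hε1 : ε ≤ 1 := by
        by_contra h
        push_neg at h
        have := hβε1 h
        rw [hadef] at hcase
        linarith
      set S : Set ℝ := Icc a 2 ∩ {r : ℝ | α * gfun s r ≤ vfun ε β r} with hSdef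
      have hScl : IsClosed S := by
        have hgc : ContinuousOn (fun r => α * gfun s r - vfun ε β r) (Icc a 2) := by
          apply ContinuousOn.sub
          · apply ContinuousOn.mul continuousOn_const
            intro r hr
            exact (gfun_contDiffAt (show (0:ℝ) < r by linarith [hr.1])).continuousAt.continuousWithinAt
          · exact (vfun_continuous ε β).continuousOn
        have hrw : S = Icc a 2 ∩ (fun r => α * gfun s r - vfun ε β r) ⁻¹' (Iic 0) := by
          rw [hSdef]
          ext t
          simp [sub_nonpos]
        rw [hrw]
        exact hgc.preimage_isClosed_of_isClosed isClosed_Icc isClosed_Iic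
      have h2S : (2:ℝ) ∈ S := by
        constructor
        · exact ⟨hcase.le, le_rfl⟩
        · show α * gfun s 2 ≤ vfun ε β 2
          rw [gfun_zero le_rfl, mul_zero]
          exact vfun_nonneg ε β 2
      have hSne : S.Nonempty := ⟨2, h2S⟩
      have hSbd : BddBelow S := ⟨a, fun r hr => hr.1.1⟩
      set r0 : ℝ := sInf S with hr0def
      have hr0S : r0 ∈ S := hScl.csInf_mem hSne hSbd
      have hr0mem : r0 ∈ Icc a 2 := hr0S.1
      have hr0ineq : α * gfun s r0 ≤ vfun ε β r0 := hr0S.2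
      have hr0a : a < r0 := by
        rcases lt_or_eq_of_le hr0mem.1 with h | h
        · exact h
        · exfalso
          have hva : vfun ε β a = 0 := by rw [hadef]; exact vfun_at_a
          have hga : 0 < gfun s a := gfun_pos hs0 (by linarith) hcase
          rw [← h, hva] at hr0ineq
          nlinarith
      have hr02 : r0 ≤ 2 := hr0mem.2
      refine ⟨r0, by linarith, ?_, ?_⟩
      · intro r hr0' hrlt
        rcases lt_trichotomy r a with h | h | h
        · have hda := hasDerivAt_wprof_A (α := α) (β := β) (ε := ε) (s := s) hβ0 hr0' (by rw [← hadef]; linarith)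
          rw [hda.deriv]
          have h1 : 0 < gfun s r := gfun_pos hs0 hr0' (by linarith)
          have h2 : Apr ε β r ≤ 0 := Apr_nonpos hβ0 r
          nlinarith [mul_pos hα0 h1]
        · have hdb := hasDerivAt_wprof_B (α := α) (β := β) (ε := ε) (s := s) hβ0 hr0' (by rw [hadef] at h; linarith)
          rw [hdb.deriv]
          have hva : vfun ε β r = 0 := by rw [h, hadef]; exact vfun_at_a
          have h1 : 0 < gfun s r := gfun_pos hs0 hr0' (by linarith)
          rw [hva]
          nlinarith [mul_pos hα0 h1]
        · have hdb := hasDerivAt_wprof_B (α := α) (β := β) (ε := ε) (s := s) hβ0 hr0' (by rw [hadef] at h; linarith)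
          rw [hdb.deriv]
          have hnotS : ¬ (α * gfun s r ≤ vfun ε β r) := by
            intro hmem
            have : r0 ≤ r := csInf_le hSbd ⟨⟨h.le, by linarith⟩, hmem⟩
            linarith
          push_neg at hnotS
          linarith
      · intro r hrgt
        have hr1 : 1 < r := by linarith
        have hdb := hasDerivAt_wprof_B (α := α) (β := β) (ε := ε) (s := s) hβ0 (by linarith) (by rw [hadef] at hr0a; linarith)
        rw [hdb.deriv]
        suffices h : α * gfun s r ≤ vfun ε β r by linarith
        rcases le_or_gt 2 r with h2r | h2r
        · rw [gfun_zero h2r, mul_zero]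
          exact vfun_nonneg ε β r
        rcases le_or_gt (1+ε) r with hm | hm
        · -- middle zone
          have harg1 : -1 + β ≤ r - (2 + ε - β) := by linarith
          have harg2 : r - (2 + ε - β) ≤ 0 := by linarith
          have hψm : psi (-1+β) ≤ psi (r - (2 + ε - β)) := psi_mono (by linarith) harg1 harg2
          have hφβ : phi (-1+β) ≤ β * psi (-1+β) / Zc := phi_small hβ0 (by linarith)
          have hφβ0 : 0 < phi (-1+β) := phi_pos (by linarith)
          have hψβ0 : 0 < psi (-1+β) := psi_pos (abs_lt.2 ⟨by linarith, by linarith⟩)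
          have hv : 1/β ≤ vfun ε β r := by
            unfold vfun
            have hZne : Zc ≠ 0 := Zc_pos.ne'
            have hψne : psi (-1+β) ≠ 0 := hψβ0.ne'
            have hβne : β ≠ 0 := hβ0.ne'
            calc 1/β = (psi (-1+β)/Zc) / (β * psi (-1+β) / Zc) := by
                  field_simp
              _ ≤ (psi (-1+β)/Zc) / phi (-1+β) :=
                  div_le_div_of_nonneg_left (div_nonneg hψβ0.le Zc_pos.le) hφβ0 hφβ
              _ ≤ psi (r - (2+ε-β))/Zc / phi (-1+β) :=
                  (div_le_div_iff_of_pos_right hφβ0).2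
                    ((div_le_div_iff_of_pos_right Zc_pos).2 hψm)
          have hg : α * gfun s r ≤ Cb := by
            have hb := hCb r ⟨by linarith, h2r.le⟩
            rw [Real.norm_eq_abs] at hb
            have hgn : 0 ≤ gfun s r := gfun_nonneg hs0 (by linarith)
            nlinarith [le_abs_self (gfun s r)]
          have hCblt : Cb < 1/β := by
            rw [lt_div_iff₀ hβ0]
            nlinarith
          linarith
        · -- ratio zone
          have hxa : (-1:ℝ) < r0 - (2 + ε - β) := by rw [hadef] at hr0a; linarith
          have hxb : r - (2 + ε - β) ≤ -1 + β := by linarith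
          have hψr := psi_ratio hβ0 hβhalf hxa (by linarith : r0 - (2+ε-β) ≤ r - (2+ε-β)) hxb
          rw [show (r - (2+ε-β)) - (r0 - (2+ε-β)) = r - r0 by ring] at hψr
          have hφβ0 : 0 < phi (-1+β) := phi_pos (by linarith)
          have hZφ : 0 < Zc * phi (-1+β) := mul_pos Zc_pos hφβ0
          have hvchain : vfun ε β r0 * Real.exp ((r - r0)/(4*β^2)) ≤ vfun ε β r := by
            unfold vfun
            rw [div_div, div_div, div_mul_eq_mul_div]
            exact (div_le_div_iff_of_pos_right hZφ).2 hψr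
          have hgg : gfun s r ≤ gfun s r0 * Real.exp (L * (r - r0)) :=
            hggrow r0 r (by linarith) (by linarith) (by linarith)
          have hexp : Real.exp (L * (r - r0)) ≤ Real.exp ((r - r0)/(4*β^2)) := by
            apply Real.exp_le_exp.2
            rw [div_eq_mul_inv]
            have hb2 : (0:ℝ) < 4*β^2 := by positivity
            rw [← sub_nonneg]
            have key : (r - r0) * (4*β^2)⁻¹ - L * (r - r0)
                = (r - r0) * ((4*β^2)⁻¹ - L) := by ring
            rw [key]
            apply mul_nonneg (by linarith)
            rw [sub_nonneg, ← one_div, le_div_iff₀ hb2]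
            nlinarith
          have hg0' : 0 ≤ gfun s r0 := gfun_nonneg hs0 (by linarith)
          calc α * gfun s r ≤ α * (gfun s r0 * Real.exp (L * (r - r0))) :=
                mul_le_mul_of_nonneg_left hgg hα0.le
            _ = (α * gfun s r0) * Real.exp (L * (r - r0)) := by ring
            _ ≤ (α * gfun s r0) * Real.exp ((r - r0)/(4*β^2)) :=
                mul_le_mul_of_nonneg_left hexp (mul_nonneg hα0.le hg0')
            _ ≤ vfun ε β r0 * Real.exp ((r - r0)/(4*β^2)) :=
                mul_le_mul_of_nonneg_right hr0ineq (Real.exp_nonneg _)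
            _ ≤ vfun ε β r := hvchain
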